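/- arXiv:math-ph/0609057 — 3 statements merged into one kernel-verified Lean document; each statement's English description precedes it below -/
import Mathlib

section
/- For all complex numbers u, v with u ≠ v and u, v ∉ {z_1,…,z_L}, the N²×N² matrices over End(W) satisfy [T(u)_a, T(v)_b] = [T(u)_a + T(v)_b, (u − v)^{−1} P_{ab}]; that is, the L-site evaluation realization T_a(u) = Σ_ℓ (u − z_ℓ)^{−1} 𝐏_{aℓ} satisfies the defining exchange relation of the half loop algebra of gl_N. -/
open Matrix
open scoped TensorProduct

noncomputable section

/-- `τ = e^{2πi/n}`. -/
def tau (n : ℕ) : ℂ := Complex.exp (2 * Real.pi * Complex.I / n)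

variable {N L : ℕ}
variable {V : Fin L → Type} [∀ ℓ, AddCommGroup (V ℓ)] [∀ ℓ, Module ℂ (V ℓ)]
variable (ρ : ∀ ℓ, Matrix (Fin N) (Fin N) ℂ →ₗ[ℂ] Module.End ℂ (V ℓ))

/-- The operator `X^{(ℓ)}` on `W = ⨂_ℓ V ℓ`, acting as `ρ ℓ X` in the `ℓ`-th tensor
factor and as the identity elsewhere. -/
def siteOp (ℓ : Fin L) (X : Matrix (Fin N) (Fin N) ℂ) :
    Module.End ℂ (⨂[ℂ] i, V i) :=
  PiTensorProduct.map (Function.update (fun i => (LinearMap.id : V i →ₗ[ℂ] V i)) ℓ (ρ ℓ X))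

/-- The matrix `𝐏_{aℓ}` over `End W`, whose `(i,j)` entry is `(E_{ji})^{(ℓ)}`. -/
def Pm (ℓ : Fin L) : Matrix (Fin N) (Fin N) (Module.End ℂ (⨂[ℂ] i, V i)) :=
  Matrix.of fun i j => siteOp ρ ℓ (Matrix.single j i 1)

/-- `T_a(u) = Σ_ℓ (u − z_ℓ)⁻¹ 𝐏_{aℓ}`. -/
def Tm (z : Fin L → ℂ) (u : ℂ) : Matrix (Fin N) (Fin N) (Module.End ℂ (⨂[ℂ] i, V i)) :=
  ∑ ℓ : Fin L, (u - z ℓ)⁻¹ • Pm ρ ℓ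

/-- A scalar `N×N` matrix viewed as a matrix over `End W`. -/
def emb (V : Fin L → Type) [∀ ℓ, AddCommGroup (V ℓ)] [∀ ℓ, Module ℂ (V ℓ)]
    (M : Matrix (Fin N) (Fin N) ℂ) :
    Matrix (Fin N) (Fin N) (Module.End ℂ (⨂[ℂ] i, V i)) :=
  M.map (algebraMap ℂ (Module.End ℂ (⨂[ℂ] i, V i)))

/-- `B_a(u) = Σ_{k=0}^{n−1} τ^k G^k T_a(τ^k u) G^{−k}`. -/
def Bm (z : Fin L → ℂ) (n : ℕ) (G : Matrix (Fin N) (Fin N) ℂ) (u : ℂ) :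
    Matrix (Fin N) (Fin N) (Module.End ℂ (⨂[ℂ] i, V i)) :=
  ∑ k ∈ Finset.range n,
    tau n ^ k • (emb V (G ^ k) * Tm ρ z (tau n ^ k * u) * emb V (G⁻¹ ^ k))

/-- `M_a = M ⊗ 1` as an `N²×N²` matrix. -/
def aM {A : Type} [Zero A] (M : Matrix (Fin N) (Fin N) A) :
    Matrix (Fin N × Fin N) (Fin N × Fin N) A :=
  Matrix.of fun p q => if p.2 = q.2 then M p.1 q.1 else 0

/-- `M_b = 1 ⊗ M` as an `N²×N²` matrix. -/
def bM {A : Type} [Zero A] (M : Matrix (Fin N) (Fin N) A) :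
    Matrix (Fin N × Fin N) (Fin N × Fin N) A :=
  Matrix.of fun p q => if p.1 = q.1 then M p.2 q.2 else 0

/-- The permutation matrix `P_{ab} = Σ_{ij} E_{ij} ⊗ E_{ji}`. -/
def PP (N : ℕ) (A : Type) [Zero A] [One A] :
    Matrix (Fin N × Fin N) (Fin N × Fin N) A :=
  Matrix.of fun p q => if p.1 = q.2 ∧ p.2 = q.1 then 1 else 0

/-- helper: single-site operator -/
def S (ℓ : Fin L) (A : Module.End ℂ (V ℓ)) : Module.End ℂ (⨂[ℂ] i, V i) :=
  PiTensorProduct.map (Function.update (fun i => (LinearMap.id : V i →ₗ[ℂ] V i)) ℓ A)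

lemma upd_eval (ℓ : Fin L) (A : Module.End ℂ (V ℓ)) (x : ∀ i, V i) :
    (fun i => (Function.update (fun i => (LinearMap.id : V i →ₗ[ℂ] V i)) ℓ A i) (x i))
      = Function.update x ℓ (A (x ℓ)) := by
  funext i
  rcases eq_or_ne i ℓ with rfl | h
  · simp
  · simp [Function.update_of_ne h]

lemma S_tprod (ℓ : Fin L) (A : Module.End ℂ (V ℓ)) (x : ∀ i, V i) :
    S ℓ A (PiTensorProduct.tprod ℂ x) = PiTensorProduct.tprod ℂ (Function.update x ℓ (A (x ℓ))) := by
  rw [S, PiTensorProduct.map_tprod, upd_eval]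

lemma S_mul (ℓ : Fin L) (A B : Module.End ℂ (V ℓ)) : S ℓ A * S ℓ B = S ℓ (A * B) := by
  apply PiTensorProduct.ext
  ext x
  simp only [LinearMap.compMultilinearMap_apply, Module.End.mul_apply, S_tprod]
  congr 1
  simp [Function.update_idem]

lemma S_comm {ℓ m : Fin L} (h : ℓ ≠ m) (A : Module.End ℂ (V ℓ)) (B : Module.End ℂ (V m)) :
    S ℓ A * S m B = S m B * S ℓ A := by
  apply PiTensorProduct.ext
  ext x
  simp only [LinearMap.compMultilinearMap_apply, Module.End.mul_apply, S_tprod]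
  rw [Function.update_of_ne h.symm, Function.update_of_ne h, Function.update_comm h]

lemma S_sub (ℓ : Fin L) (A B : Module.End ℂ (V ℓ)) : S ℓ (A - B) = S ℓ A - S ℓ B := by
  apply PiTensorProduct.ext
  ext x
  simp only [LinearMap.compMultilinearMap_apply, LinearMap.sub_apply, S_tprod,
    LinearMap.sub_apply, MultilinearMap.map_update_sub]

lemma siteOp_eq (ℓ : Fin L) (X : Matrix (Fin N) (Fin N) ℂ) : siteOp ρ ℓ X = S ℓ (ρ ℓ X) := rfl

lemma site_comm
    (hρ : ∀ ℓ (X Y : Matrix (Fin N) (Fin N) ℂ),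
      ρ ℓ (X * Y - Y * X) = ρ ℓ X * ρ ℓ Y - ρ ℓ Y * ρ ℓ X)
    (ℓ m : Fin L) (X Y : Matrix (Fin N) (Fin N) ℂ) :
    siteOp ρ ℓ X * siteOp ρ m Y - siteOp ρ m Y * siteOp ρ ℓ X
      = if ℓ = m then siteOp ρ ℓ (X * Y - Y * X) else 0 := by
  rcases eq_or_ne ℓ m with rfl | h
  · simp [siteOp_eq, ← S_mul, hρ, S_sub]
  · rw [if_neg h, siteOp_eq, siteOp_eq, S_comm h, sub_self]

lemma siteOp_zero (ℓ : Fin L) : siteOp ρ ℓ 0 = 0 := by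
  have := S_sub ℓ (ρ ℓ 0) (ρ ℓ 0)
  simpa [siteOp_eq] using this

lemma Tm_apply (z : Fin L → ℂ) (w : ℂ) (a b : Fin N) :
    Tm ρ z w a b = ∑ ℓ, (w - z ℓ)⁻¹ • siteOp ρ ℓ (Matrix.single b a 1) := by
  simp [Tm, Pm, Matrix.sum_apply, Matrix.smul_apply, Matrix.of_apply]


lemma siteOp_sub (ℓ : Fin L) (X Y : Matrix (Fin N) (Fin N) ℂ) :
    siteOp ρ ℓ (X - Y) = siteOp ρ ℓ X - siteOp ρ ℓ Y := by
  rw [siteOp_eq, map_sub, S_sub]; rfl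

lemma siteOp_neg (ℓ : Fin L) (X : Matrix (Fin N) (Fin N) ℂ) :
    siteOp ρ ℓ (-X) = -siteOp ρ ℓ X := by
  have := siteOp_sub ρ ℓ 0 X
  simpa [siteOp_zero] using this

lemma keyalg {M : Type*} [AddCommGroup M] [Module ℂ M] (c a b : ℂ) (hc : a * b = c * (b - a))
    (x y : M) :
    (a * b) • (x - y) = c • (a • y) + c • (b • x) - (c • (a • x) + c • (b • y)) := by
  rw [hc]; module

lemma keyalg2 {M : Type*} [AddCommGroup M] [Module ℂ M] (c a b : ℂ) (hc : a * b = c * (b - a))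
    (x : M) : (a * b) • x = c • (b • x) - c • (a • x) := by
  rw [hc]; module


lemma keyalg3 {M : Type*} [AddCommGroup M] [Module ℂ M] (c a b : ℂ) (hc : a * b = c * (b - a))
    (x : M) : -((a * b) • x) = c • (a • x) - c • (b • x) := by
  rw [hc]; module

lemma core
    (hρ : ∀ ℓ (X Y : Matrix (Fin N) (Fin N) ℂ),
      ρ ℓ (X * Y - Y * X) = ρ ℓ X * ρ ℓ Y - ρ ℓ Y * ρ ℓ X)
    (z : Fin L → ℂ) (u v : ℂ) (huv : u ≠ v) (hu : ∀ ℓ, u ≠ z ℓ) (hv : ∀ ℓ, v ≠ z ℓ)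
    (i j k l : Fin N) :
    Tm ρ z u i k * Tm ρ z v j l - Tm ρ z v j l * Tm ρ z u i k =
      (u - v)⁻¹ • ((if j = k then Tm ρ z u i l else 0) + (if i = l then Tm ρ z v j k else 0))
        - (u - v)⁻¹ • ((if i = l then Tm ρ z u j k else 0) + (if j = k then Tm ρ z v i l else 0)) := by
  set cu : Fin L → ℂ := fun ℓ => (u - z ℓ)⁻¹ with hcu
  set cv : Fin L → ℂ := fun ℓ => (v - z ℓ)⁻¹ with hcv
  set A : Fin L → Module.End ℂ (⨂[ℂ] i, V i) := fun ℓ => siteOp ρ ℓ (Matrix.single k i 1) with hA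
  set B : Fin L → Module.End ℂ (⨂[ℂ] i, V i) := fun ℓ => siteOp ρ ℓ (Matrix.single l j 1) with hB
  have hlhs : Tm ρ z u i k * Tm ρ z v j l - Tm ρ z v j l * Tm ρ z u i k
      = ∑ ℓ, (cu ℓ * cv ℓ) •
          siteOp ρ ℓ (Matrix.single k i 1 * Matrix.single l j 1
            - Matrix.single l j 1 * Matrix.single k i 1) := by
    have e1 : Tm ρ z u i k * Tm ρ z v j l = ∑ ℓ, ∑ m, (cu ℓ • A ℓ) * (cv m • B m) := by
      rw [Tm_apply, Tm_apply, Finset.sum_mul_sum]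
    have e2 : Tm ρ z v j l * Tm ρ z u i k = ∑ ℓ, ∑ m, (cv m • B m) * (cu ℓ • A ℓ) := by
      rw [Tm_apply, Tm_apply, Finset.sum_mul_sum, Finset.sum_comm]
    rw [e1, e2, ← Finset.sum_sub_distrib]
    refine Finset.sum_congr rfl fun ℓ _ => ?_
    rw [← Finset.sum_sub_distrib]
    have e3 : ∀ m, (cu ℓ • A ℓ) * (cv m • B m) - (cv m • B m) * (cu ℓ • A ℓ)
        = (cu ℓ * cv m) • (if ℓ = m then siteOp ρ ℓ (Matrix.single k i 1 * Matrix.single l j 1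
            - Matrix.single l j 1 * Matrix.single k i 1) else 0) := by
      intro m
      rw [smul_mul_smul_comm, smul_mul_smul_comm, mul_comm (cv m)]
      refine ((smul_sub (cu ℓ * cv m) (A ℓ * B m) (B m * A ℓ)).symm).trans ?_
      simp only [hA, hB]
      rw [site_comm ρ hρ]
    simp_rw [e3, smul_ite, smul_zero, Finset.sum_ite_eq, Finset.mem_univ, if_pos]
  rw [hlhs]
  have hret : ∀ (w : ℂ) (a b : Fin N) (P : Prop) (_ : Decidable P),
      (if P then Tm ρ z w a b else 0)
        = ∑ ℓ, (if P then (w - z ℓ)⁻¹ • siteOp ρ ℓ (Matrix.single b a 1) else 0) := by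
    intro w a b P hP
    split
    · rw [Tm_apply]
    · simp
  rw [hret u i l _ _, hret v j k _ _, hret u j k _ _, hret v i l _ _,
    ← Finset.sum_add_distrib, ← Finset.sum_add_distrib, Finset.smul_sum, Finset.smul_sum,
    ← Finset.sum_sub_distrib]
  refine Finset.sum_congr rfl fun ℓ _ => ?_
  have h1 : u - z ℓ ≠ 0 := sub_ne_zero.mpr (hu ℓ)
  have h2 : v - z ℓ ≠ 0 := sub_ne_zero.mpr (hv ℓ)
  have h3 : u - v ≠ 0 := sub_ne_zero.mpr huv
  have hc : (u - z ℓ)⁻¹ * (v - z ℓ)⁻¹ = (u - v)⁻¹ * ((v - z ℓ)⁻¹ - (u - z ℓ)⁻¹) := by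
    field_simp
    ring
  rcases eq_or_ne i l with rfl | hil <;> rcases eq_or_ne j k with rfl | hjk
  · simp only [hcu, hcv, if_pos rfl, Matrix.single_mul_single_same, one_mul, siteOp_sub,
      smul_add]
    exact keyalg _ _ _ hc _ _
  · simp [hcu, hcv, hjk, Matrix.single_mul_single_of_ne, Matrix.single_mul_single_same,
      siteOp_sub, siteOp_zero]
    exact keyalg2 (u - v)⁻¹ (u - z ℓ)⁻¹ (v - z ℓ)⁻¹ hc (siteOp ρ ℓ (Matrix.single k j 1))
  · simp [hcu, hcv, hil, Matrix.single_mul_single_of_ne, Matrix.single_mul_single_same,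
      siteOp_sub, siteOp_zero, siteOp_neg]
    exact keyalg3 _ _ _ hc _
  · simp [hcu, hcv, hil, hjk, Matrix.single_mul_single_of_ne, siteOp_zero]

section EntryLemmas
variable {A : Type} [Ring A]

lemma ab_apply (M M' : Matrix (Fin N) (Fin N) A) (p q : Fin N × Fin N) :
    (aM M * bM M') p q = M p.1 q.1 * M' p.2 q.2 := by
  simp [Matrix.mul_apply, aM, bM, Fintype.sum_prod_type, ite_mul, mul_ite]

lemma ba_apply (M M' : Matrix (Fin N) (Fin N) A) (p q : Fin N × Fin N) :
    (bM M' * aM M) p q = M' p.2 q.2 * M p.1 q.1 := by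
  simp [Matrix.mul_apply, aM, bM, Fintype.sum_prod_type, ite_mul, mul_ite]

lemma aPP_apply (M : Matrix (Fin N) (Fin N) A) (p q : Fin N × Fin N) :
    (aM M * PP N A) p q = if p.2 = q.1 then M p.1 q.2 else 0 := by
  simp [Matrix.mul_apply, aM, PP, Fintype.sum_prod_type, ite_mul, mul_ite, ite_and]

lemma bPP_apply (M : Matrix (Fin N) (Fin N) A) (p q : Fin N × Fin N) :
    (bM M * PP N A) p q = if p.1 = q.2 then M p.2 q.1 else 0 := by
  simp [Matrix.mul_apply, bM, PP, Fintype.sum_prod_type, ite_mul, mul_ite, ite_and]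

lemma PPa_apply (M : Matrix (Fin N) (Fin N) A) (p q : Fin N × Fin N) :
    (PP N A * aM M) p q = if p.1 = q.2 then M p.2 q.1 else 0 := by
  simp [Matrix.mul_apply, aM, PP, Fintype.sum_prod_type, ite_mul, mul_ite, ite_and]

lemma PPb_apply (M : Matrix (Fin N) (Fin N) A) (p q : Fin N × Fin N) :
    (PP N A * bM M) p q = if p.2 = q.1 then M p.1 q.2 else 0 := by
  simp [Matrix.mul_apply, bM, PP, Fintype.sum_prod_type, ite_mul, mul_ite, ite_and]

end EntryLemmas

/-- The `L`-site evaluation realization `T_a(u) = Σ_ℓ (u − z_ℓ)⁻¹ 𝐏_{aℓ}` satisfies the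
defining exchange relation of the half loop algebra of `gl_N`:
`[T(u)_a, T(v)_b] = [T(u)_a + T(v)_b, (u − v)⁻¹ P_{ab}]`. -/
theorem statement1
    (hN : 1 ≤ N) (hL : 1 ≤ L)
    (hρ : ∀ ℓ (X Y : Matrix (Fin N) (Fin N) ℂ),
      ρ ℓ (X * Y - Y * X) = ρ ℓ X * ρ ℓ Y - ρ ℓ Y * ρ ℓ X)
    (z : Fin L → ℂ) (hz : Function.Injective z)
    (u v : ℂ) (huv : u ≠ v) (hu : ∀ ℓ, u ≠ z ℓ) (hv : ∀ ℓ, v ≠ z ℓ) :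
    aM (Tm ρ z u) * bM (Tm ρ z v) - bM (Tm ρ z v) * aM (Tm ρ z u) =
      (aM (Tm ρ z u) + bM (Tm ρ z v)) * ((u - v)⁻¹ • PP N (Module.End ℂ (⨂[ℂ] i, V i)))
        - ((u - v)⁻¹ • PP N (Module.End ℂ (⨂[ℂ] i, V i))) * (aM (Tm ρ z u) + bM (Tm ρ z v)) := by
  refine Matrix.ext fun p q => ?_
  have hco := core ρ hρ z u v huv hu hv p.1 p.2 q.1 q.2
  have h1 : (aM (Tm ρ z u) + bM (Tm ρ z v)) * ((u - v)⁻¹ • PP N (Module.End ℂ (⨂[ℂ] i, V i)))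
      = (u - v)⁻¹ • (aM (Tm ρ z u) * PP N _ + bM (Tm ρ z v) * PP N _) := by
    rw [Matrix.mul_smul, Matrix.add_mul]
  have h2 : ((u - v)⁻¹ • PP N (Module.End ℂ (⨂[ℂ] i, V i))) * (aM (Tm ρ z u) + bM (Tm ρ z v))
      = (u - v)⁻¹ • (PP N _ * aM (Tm ρ z u) + PP N _ * bM (Tm ρ z v)) := by
    rw [Matrix.smul_mul, Matrix.mul_add]
  rw [h1, h2, Matrix.sub_apply, Matrix.sub_apply, ab_apply, ba_apply,
    Matrix.smul_apply, Matrix.smul_apply, Matrix.add_apply, Matrix.add_apply,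
    aPP_apply, bPP_apply, PPa_apply, PPb_apply]
  exact hco
end
end

section
/- If X ∈ gl_N(ℂ) satisfies GX = XG, then for every complex u with τ^k u ∉ {z_1,…,z_L} for all k, the operator Σ_{ℓ=1}^L X^{(ℓ)} ∈ End(W) commutes with b′(u) := tr_a(B_a(u)²): [Σ_{ℓ=1}^L X^{(ℓ)}, b′(u)] = 0. (This is the statement that the coefficients of tr B(u)² commute with the degree-zero generators B^{(0)} of the inner-twisted half loop algebra, which span the fixed-point subalgebra of the order-n inner automorphism X ↦ G^{−1}XG.) -/
open Matrix
open scoped TensorProduct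

noncomputable section

set_option maxHeartbeats 1000000

variable {N L : ℕ}
variable {V : Fin L → Type} [∀ ℓ, AddCommGroup (V ℓ)] [∀ ℓ, Module ℂ (V ℓ)]
variable (ρ : ∀ ℓ, Matrix (Fin N) (Fin N) ℂ →ₗ[ℂ] Module.End ℂ (V ℓ))

/-! ### Auxiliary lemmas -/

lemma map_update_sub' {ι : Type*} [DecidableEq ι] {s : ι → Type*} [∀ i, AddCommGroup (s i)]
    [∀ i, Module ℂ (s i)] (f : Π i, s i →ₗ[ℂ] s i) (i : ι) (u v : s i →ₗ[ℂ] s i) :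
    PiTensorProduct.map (Function.update f i (u - v))
      = PiTensorProduct.map (Function.update f i u)
        - PiTensorProduct.map (Function.update f i v) := by
  rw [eq_sub_iff_add_eq, ← PiTensorProduct.map_update_add, sub_add_cancel]

lemma siteOp_add (ℓ : Fin L) (A B : Matrix (Fin N) (Fin N) ℂ) :
    siteOp ρ ℓ (A + B) = siteOp ρ ℓ A + siteOp ρ ℓ B := by
  unfold siteOp
  rw [map_add, PiTensorProduct.map_update_add]

lemma siteOp_smul (ℓ : Fin L) (c : ℂ) (A : Matrix (Fin N) (Fin N) ℂ) :
    siteOp ρ ℓ (c • A) = c • siteOp ρ ℓ A := by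
  unfold siteOp
  rw [LinearMap.map_smul, PiTensorProduct.map_update_smul]

/-- `siteOp` bundled as a linear map in the matrix argument. -/
def siteOpL (ℓ : Fin L) : Matrix (Fin N) (Fin N) ℂ →ₗ[ℂ] Module.End ℂ (⨂[ℂ] i, V i) where
  toFun := siteOp ρ ℓ
  map_add' := siteOp_add ρ ℓ
  map_smul' c A := by simp [siteOp_smul]

lemma siteOpL_apply (ℓ : Fin L) (A : Matrix (Fin N) (Fin N) ℂ) :
    siteOpL ρ ℓ A = siteOp ρ ℓ A := rfl

lemma siteOp_mul_same (ℓ : Fin L) (A B : Matrix (Fin N) (Fin N) ℂ) :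
    siteOp ρ ℓ A * siteOp ρ ℓ B
      = PiTensorProduct.map (Function.update (fun i => (LinearMap.id : V i →ₗ[ℂ] V i)) ℓ
          (ρ ℓ A * ρ ℓ B)) := by
  unfold siteOp
  rw [← PiTensorProduct.map_mul]
  congr 1
  funext i
  rcases eq_or_ne i ℓ with rfl | h
  · simp
  · simp [Function.update_of_ne h, ← Module.End.one_eq_id]

lemma siteOp_comm_same
    (hρ : ∀ ℓ (X Y : Matrix (Fin N) (Fin N) ℂ),
      ρ ℓ (X * Y - Y * X) = ρ ℓ X * ρ ℓ Y - ρ ℓ Y * ρ ℓ X)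
    (ℓ : Fin L) (A B : Matrix (Fin N) (Fin N) ℂ) :
    siteOp ρ ℓ A * siteOp ρ ℓ B - siteOp ρ ℓ B * siteOp ρ ℓ A = siteOp ρ ℓ (A * B - B * A) := by
  rw [siteOp_mul_same, siteOp_mul_same]
  unfold siteOp
  rw [hρ ℓ A B, map_update_sub']

lemma siteOp_comm_ne {ℓ m : Fin L} (h : ℓ ≠ m) (A B : Matrix (Fin N) (Fin N) ℂ) :
    siteOp ρ ℓ A * siteOp ρ m B = siteOp ρ m B * siteOp ρ ℓ A := by
  unfold siteOp
  rw [← PiTensorProduct.map_mul, ← PiTensorProduct.map_mul]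
  congr 1
  funext i
  rcases eq_or_ne i ℓ with rfl | hℓ
  · rw [Function.update_self, Function.update_of_ne h]
    simp [← Module.End.one_eq_id]
  · rcases eq_or_ne i m with rfl | hm
    · rw [Function.update_of_ne hℓ, Function.update_self]
      simp [← Module.End.one_eq_id]
    · simp [Function.update_of_ne hℓ, Function.update_of_ne hm, ← Module.End.one_eq_id]

lemma sum_comm_siteOp
    (hρ : ∀ ℓ (X Y : Matrix (Fin N) (Fin N) ℂ),
      ρ ℓ (X * Y - Y * X) = ρ ℓ X * ρ ℓ Y - ρ ℓ Y * ρ ℓ X)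
    (X : Matrix (Fin N) (Fin N) ℂ) (m : Fin L) (E : Matrix (Fin N) (Fin N) ℂ) :
    (∑ ℓ : Fin L, siteOp ρ ℓ X) * siteOp ρ m E - siteOp ρ m E * (∑ ℓ : Fin L, siteOp ρ ℓ X)
      = siteOp ρ m (X * E - E * X) := by
  rw [Finset.sum_mul, Finset.mul_sum, ← Finset.sum_sub_distrib, Finset.sum_eq_single m]
  · exact siteOp_comm_same ρ hρ m X E
  · intro ℓ _ hℓ
    rw [siteOp_comm_ne ρ hℓ, sub_self]
  · simp

/-- Entrywise commutator of a matrix over `End W` with a fixed operator `S`. -/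
def Dop (S : Module.End ℂ (⨂[ℂ] i, V i))
    (M : Matrix (Fin N) (Fin N) (Module.End ℂ (⨂[ℂ] i, V i))) :
    Matrix (Fin N) (Fin N) (Module.End ℂ (⨂[ℂ] i, V i)) :=
  Matrix.of fun i j => S * M i j - M i j * S

variable {S : Module.End ℂ (⨂[ℂ] i, V i)}

lemma Dop_mul (A B : Matrix (Fin N) (Fin N) (Module.End ℂ (⨂[ℂ] i, V i))) :
    Dop S (A * B) = Dop S A * B + A * Dop S B := by
  refine Matrix.ext fun i j => ?_
  simp only [Dop, Matrix.mul_apply, Matrix.of_apply, Matrix.add_apply]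
  rw [Finset.mul_sum, Finset.sum_mul, ← Finset.sum_sub_distrib, ← Finset.sum_add_distrib]
  refine Finset.sum_congr rfl fun k _ => ?_
  simp only [sub_mul, mul_sub, mul_assoc]
  abel

lemma Dop_smul (c : ℂ) (A : Matrix (Fin N) (Fin N) (Module.End ℂ (⨂[ℂ] i, V i))) :
    Dop S (c • A) = c • Dop S A := by
  refine Matrix.ext fun i j => ?_
  simp [Dop, mul_smul_comm, smul_mul_assoc, smul_sub]

lemma Dop_sum {ι : Type*} (s : Finset ι)
    (f : ι → Matrix (Fin N) (Fin N) (Module.End ℂ (⨂[ℂ] i, V i))) :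
    Dop S (∑ k ∈ s, f k) = ∑ k ∈ s, Dop S (f k) := by
  refine Matrix.ext fun i j => ?_
  simp [Dop, Matrix.sum_apply, Finset.mul_sum, Finset.sum_mul, Finset.sum_sub_distrib]

lemma Dop_emb (M : Matrix (Fin N) (Fin N) ℂ) : Dop S (emb V M) = 0 := by
  refine Matrix.ext fun i j => ?_
  simp [Dop, emb, ← Algebra.commutes (A := Module.End ℂ (⨂[ℂ] i, V i)) (M i j) S]

lemma trace_Dop (M : Matrix (Fin N) (Fin N) (Module.End ℂ (⨂[ℂ] i, V i))) :
    (Dop S M).trace = S * M.trace - M.trace * S := by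
  simp [Dop, Matrix.trace, Matrix.diag, Finset.mul_sum, Finset.sum_mul, Finset.sum_sub_distrib]

lemma trace_mul_emb_comm (C : Matrix (Fin N) (Fin N) ℂ)
    (M : Matrix (Fin N) (Fin N) (Module.End ℂ (⨂[ℂ] i, V i))) :
    (M * emb V C).trace = (emb V C * M).trace := by
  simp only [Matrix.trace, Matrix.diag, Matrix.mul_apply, emb, Matrix.map_apply]
  rw [Finset.sum_comm]
  exact Finset.sum_congr rfl fun i _ => Finset.sum_congr rfl fun j _ =>
    (Algebra.commutes _ _).symm

lemma mul_stdBasis (X : Matrix (Fin N) (Fin N) ℂ) (i j : Fin N) :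
    X * Matrix.single j i 1 = ∑ k : Fin N, X k j • Matrix.single k i 1 := by
  refine Matrix.ext fun a b => ?_
  simp [Matrix.mul_apply, Matrix.single, Matrix.sum_apply, mul_ite, ite_and,
    Finset.sum_ite_eq, Finset.sum_ite_eq', smul_ite]

lemma stdBasis_mul (X : Matrix (Fin N) (Fin N) ℂ) (i j : Fin N) :
    Matrix.single j i 1 * X = ∑ k : Fin N, X i k • Matrix.single j k 1 := by
  refine Matrix.ext fun a b => ?_
  simp [Matrix.mul_apply, Matrix.single, Matrix.sum_apply, mul_ite, ite_and,
    Finset.sum_ite_eq, Finset.sum_ite_eq', smul_ite]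

lemma Dop_Pm
    (hρ : ∀ ℓ (X Y : Matrix (Fin N) (Fin N) ℂ),
      ρ ℓ (X * Y - Y * X) = ρ ℓ X * ρ ℓ Y - ρ ℓ Y * ρ ℓ X)
    (X : Matrix (Fin N) (Fin N) ℂ) (m : Fin L) :
    Dop (∑ ℓ : Fin L, siteOp ρ ℓ X) (Pm ρ m)
      = Pm ρ m * emb V X - emb V X * Pm ρ m := by
  refine Matrix.ext fun i j => ?_
  have hL : Dop (∑ ℓ : Fin L, siteOp ρ ℓ X) (Pm ρ m) i j
      = siteOp ρ m (X * Matrix.single j i 1 - Matrix.single j i 1 * X) :=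
    sum_comm_siteOp ρ hρ X m _
  rw [hL, ← siteOpL_apply, map_sub, mul_stdBasis, stdBasis_mul, map_sum, map_sum]
  simp only [_root_.map_smul, siteOpL_apply]
  simp only [Matrix.sub_apply, Matrix.mul_apply, Pm, emb, Matrix.of_apply, Matrix.map_apply,
    Algebra.algebraMap_eq_smul_one, mul_smul_comm, smul_mul_assoc, one_mul, mul_one]

lemma emb_mul (A B : Matrix (Fin N) (Fin N) ℂ) :
    emb V (A * B) = emb V A * emb V B := by
  unfold emb
  exact Matrix.map_mul

lemma emb_comm {A B : Matrix (Fin N) (Fin N) ℂ} (h : A * B = B * A) :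
    emb V A * emb V B = emb V B * emb V A := by
  rw [← emb_mul, ← emb_mul, h]

lemma Dop_Tm
    (hρ : ∀ ℓ (X Y : Matrix (Fin N) (Fin N) ℂ),
      ρ ℓ (X * Y - Y * X) = ρ ℓ X * ρ ℓ Y - ρ ℓ Y * ρ ℓ X)
    (X : Matrix (Fin N) (Fin N) ℂ) (z : Fin L → ℂ) (u : ℂ) :
    Dop (∑ ℓ : Fin L, siteOp ρ ℓ X) (Tm ρ z u)
      = Tm ρ z u * emb V X - emb V X * Tm ρ z u := by
  unfold Tm
  rw [Dop_sum, Finset.sum_mul, Finset.mul_sum, ← Finset.sum_sub_distrib]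
  refine Finset.sum_congr rfl fun ℓ _ => ?_
  rw [Dop_smul, Dop_Pm ρ hρ X ℓ, smul_sub, smul_mul_assoc, mul_smul_comm]

lemma Dop_Bm
    (hρ : ∀ ℓ (X Y : Matrix (Fin N) (Fin N) ℂ),
      ρ ℓ (X * Y - Y * X) = ρ ℓ X * ρ ℓ Y - ρ ℓ Y * ρ ℓ X)
    (z : Fin L → ℂ) (n : ℕ) (hn : 1 ≤ n) (G : Matrix (Fin N) (Fin N) ℂ) (hG : G ^ n = 1)
    (X : Matrix (Fin N) (Fin N) ℂ) (hX : G * X = X * G) (u : ℂ) :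
    Dop (∑ ℓ : Fin L, siteOp ρ ℓ X) (Bm ρ z n G u)
      = Bm ρ z n G u * emb V X - emb V X * Bm ρ z n G u := by
  have hC : Commute G X := hX
  have hGinv : G⁻¹ = G ^ (n - 1) :=
    Matrix.inv_eq_right_inv (by rw [← pow_succ', Nat.sub_add_cancel hn, hG])
  have hGk : ∀ k : ℕ, G ^ k * X = X * G ^ k := fun k => (hC.pow_left k)
  have hGik : ∀ k : ℕ, G⁻¹ ^ k * X = X * G⁻¹ ^ k := by
    intro k
    rw [hGinv]
    exact ((hC.pow_left (n - 1)).pow_left k)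
  unfold Bm
  rw [Dop_sum, Finset.sum_mul, Finset.mul_sum, ← Finset.sum_sub_distrib]
  refine Finset.sum_congr rfl fun k _ => ?_
  rw [Dop_smul]
  set A := emb V (G ^ k) with hA
  set Cm := emb V (G⁻¹ ^ k) with hCm
  set eX := emb V X with heX
  set T := Tm ρ z (tau n ^ k * u) with hT
  have step1 : Dop (∑ ℓ : Fin L, siteOp ρ ℓ X) (A * T * Cm)
      = A * (T * eX - eX * T) * Cm := by
    rw [Dop_mul, Dop_mul, Dop_emb, Dop_emb, zero_mul, zero_add, mul_zero, add_zero,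
      Dop_Tm ρ hρ X z]
  have e2 : A * eX = eX * A := emb_comm (hGk k)
  have e1 : eX * Cm = Cm * eX := (emb_comm (hGik k)).symm
  rw [step1, mul_sub, sub_mul, smul_sub]
  congr 1
  · rw [smul_mul_assoc]
    congr 1
    simp only [mul_assoc]
    rw [e1]
  · rw [mul_smul_comm]
    congr 1
    simp only [← mul_assoc]
    rw [e2]

/-- If `X` commutes with `G`, i.e. `X` lies in the fixed-point subalgebra of the order-`n`
inner automorphism `X ↦ G⁻¹XG`, then `Σ_ℓ X^{(ℓ)}` commutes with `b′(u) = tr_a(B_a(u)²)`. -/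
theorem statement5
    (hN : 1 ≤ N) (hL : 1 ≤ L)
    (hρ : ∀ ℓ (X Y : Matrix (Fin N) (Fin N) ℂ),
      ρ ℓ (X * Y - Y * X) = ρ ℓ X * ρ ℓ Y - ρ ℓ Y * ρ ℓ X)
    (z : Fin L → ℂ) (hz : Function.Injective z)
    (n : ℕ) (hn : 1 ≤ n) (G : Matrix (Fin N) (Fin N) ℂ) (hG : G ^ n = 1)
    (X : Matrix (Fin N) (Fin N) ℂ) (hX : G * X = X * G)
    (u : ℂ) (hu : ∀ k < n, ∀ ℓ, tau n ^ k * u ≠ z ℓ) :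
    (∑ ℓ : Fin L, siteOp ρ ℓ X) * (Bm ρ z n G u * Bm ρ z n G u).trace -
      (Bm ρ z n G u * Bm ρ z n G u).trace * (∑ ℓ : Fin L, siteOp ρ ℓ X) = 0 := by
  rw [← trace_Dop, Dop_mul, Dop_Bm ρ hρ z n hn G hG X hX u]
  have h2 : (Bm ρ z n G u * emb V X - emb V X * Bm ρ z n G u) * Bm ρ z n G u
        + Bm ρ z n G u * (Bm ρ z n G u * emb V X - emb V X * Bm ρ z n G u)
      = Bm ρ z n G u * Bm ρ z n G u * emb V X - emb V X * (Bm ρ z n G u * Bm ρ z n G u) := by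
    simp only [sub_mul, mul_sub, mul_assoc]
    abel
  rw [h2, Matrix.trace_sub, trace_mul_emb_comm, sub_self]
end
end

section
/- If X ∈ gl_N(ℂ) satisfies K X^t K^{−1} = −X, then for every complex u with u, −u ∉ {z_1,…,z_L}, one has [Σ_{ℓ=1}^L X^{(ℓ)}, s′(u)] = 0, where s′(u) := tr_a(S_a(u)²). (This is the statement that the coefficients of tr S(u)² commute with the degree-zero generators S^{(0)} of the twisted half loop algebra; the matrices X with K X^t K^{−1} = −X form a Lie algebra isomorphic to so(p,q) for η = +1 and sp(N) for η = −1.) -/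
open Matrix
open scoped TensorProduct

noncomputable section

variable {N L : ℕ}
variable {V : Fin L → Type} [∀ ℓ, AddCommGroup (V ℓ)] [∀ ℓ, Module ℂ (V ℓ)]
variable (ρ : ∀ ℓ, Matrix (Fin N) (Fin N) ℂ →ₗ[ℂ] Module.End ℂ (V ℓ))

/-- `S_a(u) = T_a(u) + K T_a(−u)^{t_a} K⁻¹`. -/
def Sm (z : Fin L → ℂ) (K : Matrix (Fin N) (Fin N) ℂ) (u : ℂ) :
    Matrix (Fin N) (Fin N) (Module.End ℂ (⨂[ℂ] i, V i)) :=
  Tm ρ z u + emb V K * (Tm ρ z (-u))ᵀ * emb V K⁻¹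

/-- Partial transposition `t_a` in the first auxiliary factor of an `N²×N²` matrix. -/
def ptA {A : Type} (M : Matrix (Fin N × Fin N) (Fin N × Fin N) A) :
    Matrix (Fin N × Fin N) (Fin N × Fin N) A :=
  Matrix.of fun p q => M (q.1, p.2) (p.1, q.2)

/-- Partial transposition `t_b` in the second auxiliary factor of an `N²×N²` matrix. -/
def ptB {A : Type} (M : Matrix (Fin N × Fin N) (Fin N × Fin N) A) :
    Matrix (Fin N × Fin N) (Fin N × Fin N) A :=
  Matrix.of fun p q => M (p.1, q.2) (q.1, p.2)

-- AUX START
namespace Stmt13Aux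

variable {N L : ℕ}
variable {V : Fin L → Type} [∀ ℓ, AddCommGroup (V ℓ)] [∀ ℓ, Module ℂ (V ℓ)]
variable (ρ : ∀ ℓ, Matrix (Fin N) (Fin N) ℂ →ₗ[ℂ] Module.End ℂ (V ℓ))

/-- `siteOp` as a linear map in the matrix argument. -/
noncomputable def siteOpL (ℓ : Fin L) :
    Matrix (Fin N) (Fin N) ℂ →ₗ[ℂ] Module.End ℂ (⨂[ℂ] i, V i) where
  toFun X := siteOp ρ ℓ X
  map_add' A B := by
    dsimp only [siteOp]
    rw [map_add, PiTensorProduct.map_update_add]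
  map_smul' c A := by
    dsimp only [siteOp]
    rw [(ρ ℓ).map_smul, PiTensorProduct.map_update_smul]
    rfl

@[simp] lemma siteOpL_apply (ℓ : Fin L) (A : Matrix (Fin N) (Fin N) ℂ) :
    siteOpL ρ ℓ A = siteOp ρ ℓ A := rfl

lemma siteOp_mul_same (ℓ : Fin L) (A B : Matrix (Fin N) (Fin N) ℂ) :
    siteOp ρ ℓ A * siteOp ρ ℓ B =
      PiTensorProduct.map
        (Function.update (fun i => (LinearMap.id : V i →ₗ[ℂ] V i)) ℓ (ρ ℓ A * ρ ℓ B)) := by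
  unfold siteOp
  rw [← PiTensorProduct.map_mul]
  congr 1
  funext i
  by_cases h : i = ℓ
  · subst h; simp
  · simp [Function.update_of_ne h, Module.End.mul_eq_comp]

lemma siteOp_comm (ℓ m : Fin L) (h : m ≠ ℓ) (A B : Matrix (Fin N) (Fin N) ℂ) :
    siteOp ρ m A * siteOp ρ ℓ B = siteOp ρ ℓ B * siteOp ρ m A := by
  unfold siteOp
  rw [← PiTensorProduct.map_mul, ← PiTensorProduct.map_mul]
  congr 1
  funext i
  by_cases hm : i = m
  · subst hm
    simp [Function.update_of_ne h, Module.End.mul_eq_comp]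
  · by_cases hl : i = ℓ
    · subst hl
      simp [Function.update_of_ne hm, Module.End.mul_eq_comp]
    · simp [Function.update_of_ne hm, Function.update_of_ne hl]

lemma comm_siteOp
    (hρ : ∀ ℓ (X Y : Matrix (Fin N) (Fin N) ℂ),
      ρ ℓ (X * Y - Y * X) = ρ ℓ X * ρ ℓ Y - ρ ℓ Y * ρ ℓ X)
    (X : Matrix (Fin N) (Fin N) ℂ) (ℓ : Fin L) (Y : Matrix (Fin N) (Fin N) ℂ) :
    (∑ m : Fin L, siteOp ρ m X) * siteOp ρ ℓ Y -
      siteOp ρ ℓ Y * (∑ m : Fin L, siteOp ρ m X) = siteOp ρ ℓ (X * Y - Y * X) := by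
  rw [Finset.sum_mul, Finset.mul_sum, ← Finset.sum_sub_distrib,
    Finset.sum_eq_single ℓ (fun m _ hm => by rw [siteOp_comm ρ ℓ m hm, sub_self])
      (fun h => absurd (Finset.mem_univ ℓ) h)]
  rw [siteOp_mul_same, siteOp_mul_same]
  unfold siteOp
  rw [hρ ℓ X Y, sub_eq_add_neg, sub_eq_add_neg, ← neg_one_smul ℂ (ρ ℓ Y * ρ ℓ X),
    PiTensorProduct.map_update_add, PiTensorProduct.map_update_smul]
  module

lemma X_mul_E (X : Matrix (Fin N) (Fin N) ℂ) (i j : Fin N) :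
    X * Matrix.single j i 1 - Matrix.single j i 1 * X
      = (∑ a, X a j • Matrix.single a i (1 : ℂ))
        - ∑ b, X i b • Matrix.single j b (1 : ℂ) := by
  ext a b
  simp [Matrix.mul_apply, Matrix.single, Matrix.sum_apply, ite_and, mul_ite,
    Finset.sum_ite_eq, Finset.sum_ite_eq']

end Stmt13Aux
-- AUX END

namespace Stmt13Aux

variable {N L : ℕ}
variable {V : Fin L → Type} [∀ ℓ, AddCommGroup (V ℓ)] [∀ ℓ, Module ℂ (V ℓ)]
variable (ρ : ∀ ℓ, Matrix (Fin N) (Fin N) ℂ →ₗ[ℂ] Module.End ℂ (V ℓ))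

lemma emb_mul (A B : Matrix (Fin N) (Fin N) ℂ) :
    emb V (A * B) = emb V A * emb V B :=
  Matrix.map_mul

lemma emb_neg (A : Matrix (Fin N) (Fin N) ℂ) : emb V (-A) = -emb V A := by
  refine Matrix.ext fun i j => ?_
  simp [emb]

lemma diag_comm_emb (x : Module.End ℂ (⨂[ℂ] i, V i)) (C : Matrix (Fin N) (Fin N) ℂ) :
    Matrix.diagonal (fun _ : Fin N => x) * emb V C
      = emb V C * Matrix.diagonal (fun _ : Fin N => x) := by
  refine Matrix.ext fun i j => ?_
  simp only [Matrix.diagonal_mul, Matrix.mul_diagonal, emb, Matrix.map_apply]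
  exact (Algebra.commutes _ _).symm

lemma comm_Pm
    (hρ : ∀ ℓ (X Y : Matrix (Fin N) (Fin N) ℂ),
      ρ ℓ (X * Y - Y * X) = ρ ℓ X * ρ ℓ Y - ρ ℓ Y * ρ ℓ X)
    (X : Matrix (Fin N) (Fin N) ℂ) (ℓ : Fin L) :
    Matrix.diagonal (fun _ : Fin N => ∑ m : Fin L, siteOp ρ m X) * Pm ρ ℓ
      - Pm ρ ℓ * Matrix.diagonal (fun _ : Fin N => ∑ m : Fin L, siteOp ρ m X)
    = Pm ρ ℓ * emb V X - emb V X * Pm ρ ℓ := by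
  refine Matrix.ext fun i j => ?_
  simp only [Matrix.sub_apply, Matrix.diagonal_mul, Matrix.mul_diagonal]
  rw [show (Pm ρ ℓ) i j = siteOp ρ ℓ (Matrix.single j i 1) from rfl,
    comm_siteOp ρ hρ X ℓ _, X_mul_E, ← siteOpL_apply, map_sub, map_sum, map_sum]
  simp only [_root_.map_smul, siteOpL_apply]
  simp only [Matrix.mul_apply, emb, Matrix.map_apply]
  refine congrArg₂ (· - ·) ?_ ?_
  · refine Finset.sum_congr rfl fun a _ => ?_
    rw [Algebra.smul_def, Algebra.commutes]
    rfl
  · refine Finset.sum_congr rfl fun b _ => ?_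
    rw [Algebra.smul_def]
    rfl

lemma comm_Tm
    (hρ : ∀ ℓ (X Y : Matrix (Fin N) (Fin N) ℂ),
      ρ ℓ (X * Y - Y * X) = ρ ℓ X * ρ ℓ Y - ρ ℓ Y * ρ ℓ X)
    (X : Matrix (Fin N) (Fin N) ℂ) (z : Fin L → ℂ) (u : ℂ) :
    Matrix.diagonal (fun _ : Fin N => ∑ m : Fin L, siteOp ρ m X) * Tm ρ z u
      - Tm ρ z u * Matrix.diagonal (fun _ : Fin N => ∑ m : Fin L, siteOp ρ m X)
    = Tm ρ z u * emb V X - emb V X * Tm ρ z u := by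
  unfold Tm
  rw [Matrix.mul_sum, Matrix.sum_mul, Matrix.sum_mul, Matrix.mul_sum,
    ← Finset.sum_sub_distrib, ← Finset.sum_sub_distrib]
  refine Finset.sum_congr rfl fun ℓ _ => ?_
  simp only [Matrix.mul_smul, Matrix.smul_mul]
  have h := congrArg (fun M => (u - z ℓ)⁻¹ • M) (comm_Pm ρ hρ X ℓ)
  simp only [smul_sub] at h
  exact h

lemma comm_transpose (x : Module.End ℂ (⨂[ℂ] i, V i)) (X : Matrix (Fin N) (Fin N) ℂ)
    (M : Matrix (Fin N) (Fin N) (Module.End ℂ (⨂[ℂ] i, V i)))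
    (h : Matrix.diagonal (fun _ : Fin N => x) * M - M * Matrix.diagonal (fun _ : Fin N => x)
      = M * emb V X - emb V X * M) :
    Matrix.diagonal (fun _ : Fin N => x) * Mᵀ - Mᵀ * Matrix.diagonal (fun _ : Fin N => x)
      = emb V Xᵀ * Mᵀ - Mᵀ * emb V Xᵀ := by
  refine Matrix.ext fun i j => ?_
  have h2 := congrFun (congrFun h j) i
  simp only [Matrix.sub_apply, Matrix.diagonal_mul, Matrix.mul_diagonal] at h2 ⊢
  simp only [Matrix.mul_apply, Matrix.transpose_apply, emb, Matrix.map_apply] at h2 ⊢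
  rw [h2]
  congr 1
  · exact Finset.sum_congr rfl fun k _ => (Algebra.commutes _ _).symm
  · exact Finset.sum_congr rfl fun k _ => (Algebra.commutes _ _)

end Stmt13Aux

/-- If `K Xᵀ K⁻¹ = −X` (such `X` form a Lie algebra isomorphic to `so(p,q)` for `η = +1`
and `sp(N)` for `η = −1`), then `Σ_ℓ X^{(ℓ)}` commutes with `s′(u) = tr_a(S_a(u)²)`. -/
theorem statement13
    (hN : 1 ≤ N) (hL : 1 ≤ L)
    (hρ : ∀ ℓ (X Y : Matrix (Fin N) (Fin N) ℂ),
      ρ ℓ (X * Y - Y * X) = ρ ℓ X * ρ ℓ Y - ρ ℓ Y * ρ ℓ X)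
    (z : Fin L → ℂ) (hz : Function.Injective z)
    (η : ℂ) (hη : η = 1 ∨ η = -1)
    (K : Matrix (Fin N) (Fin N) ℂ) (hKre : ∀ i j, (K i j).im = 0)
    (hKinv : IsUnit K.det) (hKt : Kᵀ = η • K)
    (X : Matrix (Fin N) (Fin N) ℂ) (hX : K * Xᵀ * K⁻¹ = -X)
    (u : ℂ) (hu : ∀ ℓ, u ≠ z ℓ ∧ -u ≠ z ℓ) :
    (∑ ℓ : Fin L, siteOp ρ ℓ X) * (Sm ρ z K u * Sm ρ z K u).trace -
      (Sm ρ z K u * Sm ρ z K u).trace * (∑ ℓ : Fin L, siteOp ρ ℓ X) = 0 := by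
  have hK2 : K⁻¹ * K = 1 := Matrix.nonsing_inv_mul K hKinv
  have hXK : K * Xᵀ = -(X * K) := by
    calc K * Xᵀ = K * Xᵀ * (K⁻¹ * K) := by rw [hK2, Matrix.mul_one]
      _ = (K * Xᵀ * K⁻¹) * K := by rw [Matrix.mul_assoc (K * Xᵀ) K⁻¹ K]
      _ = -X * K := by rw [hX]
      _ = -(X * K) := Matrix.neg_mul X K
  have hXKi : Xᵀ * K⁻¹ = -(K⁻¹ * X) := by
    calc Xᵀ * K⁻¹ = ((K⁻¹ * K) * Xᵀ) * K⁻¹ := by rw [hK2, Matrix.one_mul]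
      _ = K⁻¹ * (K * Xᵀ * K⁻¹) := by rw [Matrix.mul_assoc K⁻¹ K Xᵀ, Matrix.mul_assoc]
      _ = K⁻¹ * (-X) := by rw [hX]
      _ = -(K⁻¹ * X) := Matrix.mul_neg K⁻¹ X
  set Xh : Module.End ℂ (⨂[ℂ] i, V i) := ∑ ℓ : Fin L, siteOp ρ ℓ X with hXh
  set D : Matrix (Fin N) (Fin N) (Module.End ℂ (⨂[ℂ] i, V i)) :=
    Matrix.diagonal (fun _ : Fin N => Xh) with hD
  set eX := emb V X with heX
  set eXt := emb V Xᵀ with heXt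
  set eK := emb V K with heK
  set eK' := emb V K⁻¹ with heK'
  set T' := (Tm ρ z (-u))ᵀ with hT'
  have hT : D * Tm ρ z u - Tm ρ z u * D = Tm ρ z u * eX - eX * Tm ρ z u :=
    Stmt13Aux.comm_Tm ρ hρ X z u
  have hTt : D * T' - T' * D = eXt * T' - T' * eXt :=
    Stmt13Aux.comm_transpose Xh X (Tm ρ z (-u)) (Stmt13Aux.comm_Tm ρ hρ X z (-u))
  have hKX : eK * eXt = -(eX * eK) := by
    rw [heK, heXt, ← Stmt13Aux.emb_mul, hXK, Stmt13Aux.emb_neg, Stmt13Aux.emb_mul]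
  have hXKi' : eXt * eK' = -(eK' * eX) := by
    rw [heK', heXt, ← Stmt13Aux.emb_mul, hXKi, Stmt13Aux.emb_neg, Stmt13Aux.emb_mul]
  have cK : D * eK = eK * D := Stmt13Aux.diag_comm_emb Xh K
  have cK' : eK' * D = D * eK' := (Stmt13Aux.diag_comm_emb Xh K⁻¹).symm
  have f1 : eK * (eXt * T') * eK' = -(eX * (eK * T' * eK')) := by
    rw [← Matrix.mul_assoc eK eXt T', hKX]
    simp [Matrix.mul_assoc]
  have f2 : eK * (T' * eXt) * eK' = -((eK * T' * eK') * eX) := by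
    rw [← Matrix.mul_assoc eK T' eXt, Matrix.mul_assoc (eK * T') eXt eK', hXKi']
    simp [Matrix.mul_assoc]
  have hU : D * (eK * T' * eK') - (eK * T' * eK') * D
      = (eK * T' * eK') * eX - eX * (eK * T' * eK') := by
    have e1 : D * (eK * T' * eK') = eK * (D * T') * eK' := by
      rw [← Matrix.mul_assoc, ← Matrix.mul_assoc, cK, Matrix.mul_assoc eK D T']
    have e2 : (eK * T' * eK') * D = eK * (T' * D) * eK' := by
      rw [Matrix.mul_assoc, cK', ← Matrix.mul_assoc, Matrix.mul_assoc eK T' D]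
    rw [e1, e2, ← Matrix.sub_mul, ← Matrix.mul_sub, hTt, Matrix.mul_sub, Matrix.sub_mul, f1, f2]
    abel
  set S := Sm ρ z K u with hS
  have key : D * S - S * D = S * eX - eX * S := by
    rw [hS]
    show D * (Tm ρ z u + eK * T' * eK') - (Tm ρ z u + eK * T' * eK') * D
      = (Tm ρ z u + eK * T' * eK') * eX - eX * (Tm ρ z u + eK * T' * eK')
    calc D * (Tm ρ z u + eK * T' * eK') - (Tm ρ z u + eK * T' * eK') * D
        = (D * Tm ρ z u - Tm ρ z u * D) + (D * (eK * T' * eK') - (eK * T' * eK') * D) := by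
          rw [Matrix.mul_add, Matrix.add_mul]; abel
      _ = (Tm ρ z u * eX - eX * Tm ρ z u) + ((eK * T' * eK') * eX - eX * (eK * T' * eK')) := by
          rw [hT, hU]
      _ = (Tm ρ z u + eK * T' * eK') * eX - eX * (Tm ρ z u + eK * T' * eK') := by
          rw [Matrix.add_mul, Matrix.mul_add]; abel
  have key2 : D * (S * S) - (S * S) * D = (S * S) * eX - eX * (S * S) := by
    calc D * (S * S) - (S * S) * D
        = (D * S - S * D) * S + S * (D * S - S * D) := by
          simp only [Matrix.sub_mul, Matrix.mul_sub, Matrix.mul_assoc]; abel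
      _ = (S * eX - eX * S) * S + S * (S * eX - eX * S) := by rw [key]
      _ = (S * S) * eX - eX * (S * S) := by
          simp only [Matrix.sub_mul, Matrix.mul_sub, Matrix.mul_assoc]; abel
  have t1 : (D * (S * S) - (S * S) * D).trace = Xh * (S * S).trace - (S * S).trace * Xh := by
    rw [Matrix.trace_sub]
    congr 1
    · simp [Matrix.trace, Matrix.diag, hD, Matrix.diagonal_mul, Finset.mul_sum]
    · simp [Matrix.trace, Matrix.diag, hD, Matrix.mul_diagonal, Finset.sum_mul]
  have t2 : ((S * S) * eX - eX * (S * S)).trace = 0 := by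
    rw [Matrix.trace_sub, sub_eq_zero]
    simp only [Matrix.trace, Matrix.diag, Matrix.mul_apply, heX, emb, Matrix.map_apply]
    conv_rhs => rw [Finset.sum_comm]
    exact Finset.sum_congr rfl fun i _ => Finset.sum_congr rfl fun k _ =>
      (Algebra.commutes _ _).symm
  calc Xh * (S * S).trace - (S * S).trace * Xh
      = (D * (S * S) - (S * S) * D).trace := t1.symm
    _ = ((S * S) * eX - eX * (S * S)).trace := by rw [key2]
    _ = 0 := t2
end
end
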